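/- Almost surely, limsup_{t→0⁺} B_t/√t = ∞ for a standard Brownian motion B started at 0. -/

import Mathlib

open MeasureTheory ProbabilityTheory

/-- A standard Brownian motion started at `0`. -/
structure IsBrownianMotion {Ω : Type*} [MeasurableSpace Ω] (P : Measure Ω)
    (B : ℝ → Ω → ℝ) : Prop where
  isProb : IsProbabilityMeasure P
  start : ∀ᵐ ω ∂P, B 0 ω = 0
  cont : ∀ᵐ ω ∂P, Continuous fun t => B t ω
  meas : ∀ t, Measurable (B t)
  incr : ∀ s t : ℝ, 0 ≤ s → s ≤ t →
    P.map (fun ω => B t ω - B s ω) = gaussianReal 0 (Real.toNNReal (t - s))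
  indep : ∀ (n : ℕ) (ts : Fin (n + 1) → ℝ), Monotone ts → (∀ i, 0 ≤ ts i) →
    iIndepFun
      (fun i : Fin n => fun ω => B (ts i.succ) ω - B (ts i.castSucc) ω) P

section Aux

open Real Filter Set
open scoped NNReal ENNReal

namespace BMaux

lemma setOf_le_eq_Ici (c : ℝ) : {x : ℝ | c ≤ x} = Set.Ici c := rfl

/-- Standardization of Gaussian upper tails. -/
lemma gauss_std (v : ℝ≥0) (hv : v ≠ 0) (c : ℝ) :
    gaussianReal 0 v {x | c * Real.sqrt v ≤ x} = gaussianReal 0 1 {x | c ≤ x} := by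
  have h := gaussianReal_map_const_mul (μ := 0) (v := 1) (Real.sqrt v)
  have hs : (⟨(Real.sqrt v)^2, sq_nonneg _⟩ : ℝ≥0) * 1 = v := by
    ext
    simp [Real.sq_sqrt (v.coe_nonneg)]
  replace h : Measure.map (fun x => Real.sqrt v * x) (gaussianReal 0 1) = gaussianReal 0 v := by
    rw [h, mul_zero]; congr 1
  have hsv : (0:ℝ) < Real.sqrt v := Real.sqrt_pos.2 (by exact_mod_cast pos_iff_ne_zero.2 hv)
  rw [← h, setOf_le_eq_Ici, setOf_le_eq_Ici,
    Measure.map_apply (measurable_const_mul _) measurableSet_Ici]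
  congr 1
  ext y
  simp only [Set.mem_preimage, Set.mem_Ici]
  constructor
  · intro hy; nlinarith
  · intro hy; nlinarith

/-- Standardization of Gaussian lower tails. -/
lemma gauss_std_neg (v : ℝ≥0) (hv : v ≠ 0) (c : ℝ) :
    gaussianReal 0 v {x | x ≤ -(c * Real.sqrt v)} = gaussianReal 0 1 {x | c ≤ x} := by
  have h := gaussianReal_map_const_mul (μ := 0) (v := 1) (Real.sqrt v)
  have hs : (⟨(Real.sqrt v)^2, sq_nonneg _⟩ : ℝ≥0) * 1 = v := by
    ext
    simp [Real.sq_sqrt (v.coe_nonneg)]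
  replace h : Measure.map (fun x => Real.sqrt v * x) (gaussianReal 0 1) = gaussianReal 0 v := by
    rw [h, mul_zero]; congr 1
  have hsv : (0:ℝ) < Real.sqrt v := Real.sqrt_pos.2 (by exact_mod_cast pos_iff_ne_zero.2 hv)
  have hneg := gaussianReal_map_const_mul (μ := 0) (v := 1) (-1)
  have hs1 : (⟨(-1:ℝ)^2, sq_nonneg _⟩ : ℝ≥0) * 1 = 1 := by ext; norm_num
  replace hneg : Measure.map (fun x => -1 * x) (gaussianReal 0 1) = gaussianReal 0 1 := by
    rw [hneg, mul_zero]; congr 1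
  have key : gaussianReal 0 1 {x | x ≤ -c} = gaussianReal 0 1 {x | c ≤ x} := by
    conv_rhs => rw [← hneg]
    rw [setOf_le_eq_Ici, Measure.map_apply (measurable_const_mul _) measurableSet_Ici]
    congr 1
    ext y
    simp only [Set.mem_preimage, Set.mem_Ici, Set.mem_setOf_eq]
    constructor <;> intro <;> linarith
  rw [← key, ← h, show {x : ℝ | x ≤ -(c * Real.sqrt v)} = Set.Iic (-(c * Real.sqrt v)) from rfl,
    Measure.map_apply (measurable_const_mul _) measurableSet_Iic]
  congr 1
  ext y
  simp only [Set.mem_preimage, Set.mem_Iic, Set.mem_setOf_eq]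
  constructor
  · intro hy; nlinarith
  · intro hy; nlinarith

/-- Lower bound for the standard Gaussian upper tail. -/
lemma gauss_lower {c : ℝ} (hc : 0 ≤ c) :
    ENNReal.ofReal ((Real.sqrt (2 * π))⁻¹ * Real.exp (-(c+1)^2/2)) ≤
      gaussianReal 0 1 {x | c ≤ x} := by
  have hIcc : gaussianReal 0 1 (Set.Icc c (c+1)) ≤ gaussianReal 0 1 {x | c ≤ x} := by
    apply measure_mono; intro x hx; exact hx.1
  refine le_trans ?_ hIcc
  rw [gaussianReal_apply_eq_integral _ one_ne_zero]
  apply ENNReal.ofReal_le_ofReal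
  have h := setIntegral_ge_of_const_le (μ := volume) (s := Set.Icc c (c+1))
    (f := gaussianPDFReal 0 1) (c := (Real.sqrt (2 * π))⁻¹ * Real.exp (-(c+1)^2/2))
    measurableSet_Icc (by simp) ?_ ((integrable_gaussianPDFReal 0 1).restrict)
  · have hv : (volume (Set.Icc c (c+1))).toReal = 1 := by
      rw [Real.volume_Icc]; norm_num
    rw [measureReal_def, hv, one_smul] at h
    exact h
  · intro x hx
    rw [gaussianPDFReal]
    push_cast
    simp only [mul_one, sub_zero]
    refine mul_le_mul_of_nonneg_left ?_ (by positivity)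
    apply Real.exp_le_exp.2
    have hx0 : 0 ≤ x := le_trans hc hx.1
    have : x ^ 2 ≤ (c+1)^2 := by nlinarith [hx.2]
    linarith

/-- Upper bound for the standard Gaussian upper tail. -/
lemma gauss_upper {d : ℝ} (hd : 1 ≤ d) :
    gaussianReal 0 1 {x | d ≤ x} ≤ ENNReal.ofReal (Real.exp (-d^2/2)) := by
  rw [setOf_le_eq_Ici, gaussianReal_apply_eq_integral _ one_ne_zero]
  apply ENNReal.ofReal_le_ofReal
  have hexpint : IntegrableOn (fun x : ℝ => Real.exp (-x)) (Set.Ici d) := by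
    have h := exp_neg_integrableOn_Ioi d (b := 1) one_pos
    simp only [neg_one_mul] at h
    exact h.congr_set_ae (Filter.EventuallyEq.symm Ioi_ae_eq_Ici)
  have hint2 : IntegrableOn (fun x : ℝ => Real.exp (-d^2/2 + d) * Real.exp (-x)) (Set.Ici d) :=
    hexpint.const_mul _
  have hmono : ∫ x in Set.Ici d, gaussianPDFReal 0 1 x ≤
      ∫ x in Set.Ici d, Real.exp (-d^2/2 + d) * Real.exp (-x) := by
    refine setIntegral_mono_on ((integrable_gaussianPDFReal 0 1).restrict) hint2
      measurableSet_Ici ?_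
    intro x hx
    rw [gaussianPDFReal]
    push_cast
    simp only [mul_one, sub_zero]
    have hsq : 1 ≤ Real.sqrt (2 * π) := by
      rw [show (1:ℝ) = Real.sqrt 1 by simp]
      exact Real.sqrt_le_sqrt (by nlinarith [Real.pi_gt_three])
    have h2 : Real.exp (-x^2/2) ≤ Real.exp (-d^2/2 + d) * Real.exp (-x) := by
      rw [← Real.exp_add]
      apply Real.exp_le_exp.2
      have hxd : d ≤ x := hx
      nlinarith
    calc (Real.sqrt (2*π))⁻¹ * Real.exp (-x^2/2)
        ≤ 1 * Real.exp (-x^2/2) := by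
          refine mul_le_mul_of_nonneg_right ?_ (Real.exp_nonneg _)
          exact inv_le_one_of_one_le₀ hsq
      _ ≤ Real.exp (-d^2/2 + d) * Real.exp (-x) := by rw [one_mul]; exact h2
  refine hmono.trans ?_
  rw [integral_const_mul, MeasureTheory.integral_Ici_eq_integral_Ioi,
    integral_exp_neg_Ioi, ← Real.exp_add]
  apply le_of_eq
  congr 1
  ring

/-- The sequence of times. -/
noncomputable def tt (n : ℕ) : ℝ := Real.exp (-4 * n)

lemma tt_pos (n : ℕ) : 0 < tt n := Real.exp_pos _

lemma tt_anti : Antitone tt := by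
  intro a b hab
  unfold tt
  apply Real.exp_le_exp.2
  have : (a:ℝ) ≤ b := by exact_mod_cast hab
  linarith

lemma tt_succ (n : ℕ) : tt (n+1) = tt n * Real.exp (-4) := by
  unfold tt
  rw [← Real.exp_add]
  congr 1
  push_cast
  ring

lemma tt_lt (n : ℕ) : tt (n+1) < tt n := by
  rw [tt_succ]
  nth_rewrite 2 [show tt n = tt n * 1 by ring]
  exact mul_lt_mul_of_pos_left (by
    rw [show (1:ℝ) = Real.exp 0 by simp]
    exact Real.exp_lt_exp.2 (by norm_num)) (tt_pos n)

lemma indep_X {Ω : Type*} [MeasurableSpace Ω] {P : Measure Ω} {B : ℝ → Ω → ℝ}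
    (hB : IsBrownianMotion P B) :
    iIndepFun (fun n ω => B (tt n) ω - B (tt (n+1)) ω) P := by
  rw [iIndepFun_iff_measure_inter_preimage_eq_mul]
  intro S sets hsets
  set N := S.sup id + 1 with hN
  have hSN : ∀ n ∈ S, n < N := fun n hn => Nat.lt_succ_of_le (Finset.le_sup (f := id) hn)
  set ts : Fin (N+1) → ℝ := fun i => tt (N - i) with hts
  have hmono : Monotone ts := by
    intro i j hij
    exact tt_anti (by omega)
  have hpos : ∀ i, 0 ≤ ts i := fun i => (tt_pos _).le
  have h := (hB.indep N ts hmono hpos).measure_inter_preimage_eq_mul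
  set e : ℕ → Fin N := fun n => ⟨N - 1 - n, by omega⟩ with he
  have hinj : ∀ a ∈ S, ∀ b ∈ S, e a = e b → a = b := by
    intro a ha b hb hab
    have ha' := hSN a ha; have hb' := hSN b hb
    have : N - 1 - a = N - 1 - b := congrArg Fin.val hab
    omega
  have key := h (S.image e) (sets := fun i => sets (N - 1 - i.val)) ?_
  swap
  · intro i hi
    obtain ⟨n, hn, rfl⟩ := Finset.mem_image.1 hi
    have hn' := hSN n hn
    have h3 : N - 1 - (e n).val = n := by simp only [he]; omega
    show MeasurableSet (sets (N - 1 - (e n).val))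
    rw [h3]
    exact hsets n hn
  have hfun : ∀ n ∈ S,
      ((fun ω => B (ts ((e n).succ)) ω - B (ts ((e n).castSucc)) ω) ⁻¹'
        sets (N - 1 - (e n).val))
      = (fun ω => B (tt n) ω - B (tt (n+1)) ω) ⁻¹' sets n := by
    intro n hn
    have hn' := hSN n hn
    have h1 : ts ((e n).succ) = tt n := by
      simp only [hts, he, Fin.val_succ]
      congr 1
      omega
    have h2 : ts ((e n).castSucc) = tt (n+1) := by
      simp only [hts, he, Fin.coe_castSucc]
      congr 1
      omega
    have h3 : N - 1 - (e n).val = n := by simp only [he]; omega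
    rw [h1, h2, h3]
  rw [Finset.set_biInter_finset_image, Finset.prod_image hinj] at key
  rw [Set.iInter₂_congr hfun] at key
  rw [Finset.prod_congr rfl (fun n hn => by rw [hfun n hn])] at key
  exact key

/-- Threshold sequence. -/
noncomputable def cc (n : ℕ) : ℝ := Real.sqrt (Real.log ((n:ℝ)+2))

lemma cc_nonneg (n : ℕ) : 0 ≤ cc n := Real.sqrt_nonneg _

lemma exp_quarter_le_two : Real.exp (1/4 : ℝ) ≤ 2 := by
  have h4 : (Real.exp (1/4 : ℝ))^(4:ℕ) = Real.exp 1 := by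
    rw [← Real.exp_nat_mul]; norm_num
  have h9 := Real.exp_one_lt_d9
  have hp := Real.exp_pos (1/4 : ℝ)
  nlinarith [sq_nonneg (Real.exp (1/4:ℝ) - 2), sq_nonneg (Real.exp (1/4:ℝ) + 2),
    sq_nonneg ((Real.exp (1/4:ℝ))^2 - 4)]

lemma log_ge_quarter (n : ℕ) : (1/4 : ℝ) ≤ Real.log ((n:ℝ)+2) := by
  have h1 : (1/4 : ℝ) ≤ Real.log 2 := (Real.le_log_iff_exp_le two_pos).2 exp_quarter_le_two
  refine h1.trans (Real.log_le_log two_pos ?_)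
  have : (0:ℝ) ≤ n := Nat.cast_nonneg n
  linarith

lemma cc_ge_half (n : ℕ) : (1/2 : ℝ) ≤ cc n := by
  rw [cc]
  have h := log_ge_quarter n
  have h2 := Real.sq_sqrt (le_trans (by norm_num) h : (0:ℝ) ≤ Real.log ((n:ℝ)+2))
  have h3 := Real.sqrt_nonneg (Real.log ((n:ℝ)+2))
  nlinarith

lemma cc_tendsto : Filter.Tendsto cc atTop atTop := by
  have hlog : Filter.Tendsto (fun n : ℕ => Real.log ((n:ℝ)+2)) atTop atTop := by
    apply Real.tendsto_log_atTop.comp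
    exact Filter.tendsto_atTop_add_const_right _ _ tendsto_natCast_atTop_atTop
  have := (tendsto_rpow_atTop (by norm_num : (0:ℝ) < 1/2)).comp hlog
  refine this.congr fun n => ?_
  rw [Function.comp_apply, cc, Real.sqrt_eq_rpow]

lemma kappa_half : (1/2 : ℝ) ≤ Real.sqrt (1 - Real.exp (-4)) - 2 * Real.exp (-2) := by
  have h9 := Real.exp_one_gt_d9
  have h2 : Real.exp (2:ℝ) = (Real.exp 1)^(2:ℕ) := by
    rw [← Real.exp_nat_mul]; norm_num
  have he2 : Real.exp (-2 : ℝ) ≤ 0.14 := by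
    rw [Real.exp_neg]
    rw [inv_le_comm₀ (Real.exp_pos _) (by norm_num)]
    rw [h2]
    nlinarith
  have he4 : Real.exp (-4 : ℝ) ≤ 0.02 := by
    have : Real.exp (-4 : ℝ) = (Real.exp (-2 : ℝ))^(2:ℕ) := by
      rw [← Real.exp_nat_mul]; norm_num
    rw [this]
    nlinarith [Real.exp_pos (-2:ℝ)]
  have hnn : (0:ℝ) ≤ 1 - Real.exp (-4) := by linarith
  have hsq := Real.sq_sqrt hnn
  have hpos := Real.sqrt_nonneg (1 - Real.exp (-4))
  nlinarith [Real.exp_pos (-2:ℝ)]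

lemma sqrt_split1 (n : ℕ) :
    Real.sqrt (tt n - tt (n+1)) = Real.sqrt (tt n) * Real.sqrt (1 - Real.exp (-4)) := by
  rw [show tt n - tt (n+1) = tt n * (1 - Real.exp (-4)) by rw [tt_succ]; ring]
  exact Real.sqrt_mul (tt_pos n).le _

lemma sqrt_split2 (n : ℕ) :
    Real.sqrt (tt (n+1)) = Real.sqrt (tt n) * Real.exp (-2) := by
  have h : Real.exp (-4:ℝ) = (Real.exp (-2 : ℝ))^(2:ℕ) := by
    rw [← Real.exp_nat_mul]; norm_num
  rw [tt_succ, Real.sqrt_mul (tt_pos n).le, h, Real.sqrt_sq (Real.exp_nonneg _)]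

section Prob

variable {Ω : Type*} [MeasurableSpace Ω] {P : Measure Ω} {B : ℝ → Ω → ℝ}

/-- Law of `B t` for `t ≥ 0`. -/
lemma map_B (hB : IsBrownianMotion P B) {s : ℝ} (hs : 0 ≤ s) :
    P.map (B s) = gaussianReal 0 (Real.toNNReal s) := by
  have h := hB.incr 0 s le_rfl hs
  rw [sub_zero] at h
  rw [← h]
  apply Measure.map_congr
  filter_upwards [hB.start] with ω h0
  simp [h0]

lemma P_A_eq (hB : IsBrownianMotion P B) (n : ℕ) :
    P ((fun ω => B (tt n) ω - B (tt (n+1)) ω) ⁻¹'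
        Set.Ici (cc n * Real.sqrt (tt n - tt (n+1))))
      = gaussianReal 0 1 {x | cc n ≤ x} := by
  have hmeas : Measurable fun ω => B (tt n) ω - B (tt (n+1)) ω :=
    (hB.meas _).sub (hB.meas _)
  rw [← Measure.map_apply hmeas measurableSet_Ici,
    hB.incr (tt (n+1)) (tt n) (tt_pos _).le (tt_anti (Nat.le_succ n))]
  have hpos : 0 < tt n - tt (n+1) := sub_pos.2 (tt_lt n)
  have hco : ((Real.toNNReal (tt n - tt (n+1))) : ℝ) = tt n - tt (n+1) :=
    Real.coe_toNNReal _ hpos.le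
  have hv : Real.toNNReal (tt n - tt (n+1)) ≠ 0 := by
    simp only [ne_eq, Real.toNNReal_eq_zero, not_le]
    exact hpos
  rw [show Set.Ici (cc n * Real.sqrt (tt n - tt (n+1)))
      = {x : ℝ | cc n * Real.sqrt ((Real.toNNReal (tt n - tt (n+1))) : ℝ) ≤ x} by
    rw [hco]; rfl]
  exact gauss_std _ hv _

lemma freq_A (hB : IsBrownianMotion P B) :
    ∀ᵐ ω ∂P, ∃ᶠ n in atTop,
      cc n * Real.sqrt (tt n - tt (n+1)) ≤ B (tt n) ω - B (tt (n+1)) ω := by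
  have _ := hB.isProb
  set A : ℕ → Set Ω := fun n => (fun ω => B (tt n) ω - B (tt (n+1)) ω) ⁻¹'
    Set.Ici (cc n * Real.sqrt (tt n - tt (n+1))) with hA
  have hmeasA : ∀ n, MeasurableSet (A n) :=
    fun n => ((hB.meas _).sub (hB.meas _)) measurableSet_Ici
  have hindepA : iIndepSet A P := by
    rw [iIndepSet_iff_meas_biInter hmeasA]
    intro S
    exact (indep_X hB).measure_inter_preimage_eq_mul S
      (sets := fun n => Set.Ici (cc n * Real.sqrt (tt n - tt (n+1))))
      (fun i _ => measurableSet_Ici)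
  have hsum : (∑' n, P (A n)) = ∞ := by
    have hlow : ∀ n : ℕ, ENNReal.ofReal
        ((Real.sqrt (2 * π))⁻¹ * Real.exp (-(3:ℝ)/2) * ((n:ℝ)+2) ^ (-(3/4) : ℝ))
        ≤ P (A n) := by
      intro n
      rw [hA, P_A_eq hB n]
      refine le_trans ?_ (gauss_lower (cc_nonneg n))
      apply ENNReal.ofReal_le_ofReal
      rw [mul_assoc]
      refine mul_le_mul_of_nonneg_left ?_ (by positivity)
      rw [Real.rpow_def_of_pos (by positivity), ← Real.exp_add]
      apply Real.exp_le_exp.2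
      have hL : (0:ℝ) ≤ Real.log ((n:ℝ)+2) := le_trans (by norm_num) (log_ge_quarter n)
      have hsq := Real.sq_sqrt hL
      have hnn := Real.sqrt_nonneg (Real.log ((n:ℝ)+2))
      rw [cc]
      nlinarith [sq_nonneg (Real.sqrt (Real.log ((n:ℝ)+2)) - 2)]
    rw [eq_top_iff]
    refine le_trans ?_ (ENNReal.tsum_le_tsum hlow)
    rw [top_le_iff]
    by_contra hfin
    have hsummable := ENNReal.summable_toReal hfin
    set C0 : ℝ := (Real.sqrt (2 * π))⁻¹ * Real.exp (-(3:ℝ)/2) with hC0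
    have hC0pos : 0 < C0 := by positivity
    have h1 : Summable (fun n : ℕ => C0 * ((n:ℝ)+2) ^ (-(3/4) : ℝ)) := by
      refine hsummable.congr fun n => ?_
      rw [ENNReal.toReal_ofReal (by positivity)]
    have h2 : Summable (fun n : ℕ => ((n:ℝ)+2) ^ (-(3/4) : ℝ)) := by
      have h3 := h1.mul_left C0⁻¹
      refine h3.congr fun n => ?_
      rw [← mul_assoc, inv_mul_cancel₀ hC0pos.ne', one_mul]
    have h4 : Summable (fun n : ℕ => ((n:ℝ)) ^ (-(3/4) : ℝ)) := by
      rw [← summable_nat_add_iff 2]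
      refine h2.congr fun n => ?_
      push_cast
      ring_nf
    have := Real.summable_nat_rpow.1 h4
    norm_num at this
  have h1 : P (limsup A atTop) = 1 :=
    ProbabilityTheory.measure_limsup_eq_one hmeasA hindepA hsum
  have h0 : ∀ᵐ ω ∂P, ω ∈ limsup A atTop := by
    rw [MeasureTheory.ae_iff]
    have : {ω | ¬ ω ∈ limsup A atTop} = (limsup A atTop)ᶜ := rfl
    rw [this, measure_compl (MeasurableSet.measurableSet_limsup hmeasA) (measure_ne_top _ _),
      h1, measure_univ, tsub_self]
  filter_upwards [h0] with ω hω
  exact mem_limsup_iff_frequently_mem.1 hω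

lemma P_C_le (hB : IsBrownianMotion P B) (n : ℕ) :
    P ((fun ω => B (tt (n+1)) ω) ⁻¹'
        {x | 2 * cc n * Real.sqrt (tt (n+1)) ≤ |x|})
      ≤ 2 * ENNReal.ofReal (((n:ℝ)+2) ^ (-(2:ℝ))) := by
  have hmeas := hB.meas (tt (n+1))
  have hsetm : MeasurableSet {x : ℝ | 2 * cc n * Real.sqrt (tt (n+1)) ≤ |x|} :=
    measurable_abs measurableSet_Ici
  rw [← Measure.map_apply hmeas hsetm, map_B hB (tt_pos _).le]
  have hv : Real.toNNReal (tt (n+1)) ≠ 0 := by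
    simp only [ne_eq, Real.toNNReal_eq_zero, not_le]
    exact tt_pos _
  have hco : ((Real.toNNReal (tt (n+1))) : ℝ) = tt (n+1) :=
    Real.coe_toNNReal _ (tt_pos _).le
  set d : ℝ := 2 * cc n * Real.sqrt (tt (n+1)) with hd
  have hsub : {x : ℝ | d ≤ |x|} ⊆ {x | d ≤ x} ∪ {x | x ≤ -d} := by
    intro x hx
    have hx' : d ≤ |x| := hx
    rcases le_abs.1 hx' with h | h
    · exact Or.inl h
    · exact Or.inr (by simpa using neg_le_neg h)
  refine le_trans (measure_mono hsub) (le_trans (measure_union_le _ _) ?_)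
  have e1 : gaussianReal 0 (Real.toNNReal (tt (n+1))) {x | d ≤ x}
      = gaussianReal 0 1 {x | 2 * cc n ≤ x} := by
    rw [show {x : ℝ | d ≤ x}
        = {x : ℝ | (2 * cc n) * Real.sqrt ((Real.toNNReal (tt (n+1))) : ℝ) ≤ x} by
      rw [hco]]
    exact gauss_std _ hv _
  have e2 : gaussianReal 0 (Real.toNNReal (tt (n+1))) {x | x ≤ -d}
      = gaussianReal 0 1 {x | 2 * cc n ≤ x} := by
    rw [show {x : ℝ | x ≤ -d}
        = {x : ℝ | x ≤ -((2 * cc n) * Real.sqrt ((Real.toNNReal (tt (n+1))) : ℝ))} by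
      rw [hco]]
    exact gauss_std_neg _ hv _
  rw [e1, e2, ← two_mul]
  have hone : (1:ℝ) ≤ 2 * cc n := by
    have := cc_ge_half n
    linarith
  refine mul_le_mul_of_nonneg_left (le_trans (gauss_upper hone) ?_) (by norm_num)
  apply ENNReal.ofReal_le_ofReal
  apply le_of_eq
  rw [Real.rpow_def_of_pos (by positivity)]
  congr 1
  have hL : (0:ℝ) ≤ Real.log ((n:ℝ)+2) := le_trans (by norm_num) (log_ge_quarter n)
  have hsq := Real.sq_sqrt hL
  rw [cc]
  nlinarith

lemma ev_C (hB : IsBrownianMotion P B) :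
    ∀ᵐ ω ∂P, ∀ᶠ n in atTop,
      |B (tt (n+1)) ω| < 2 * cc n * Real.sqrt (tt (n+1)) := by
  set C : ℕ → Set Ω := fun n => (fun ω => B (tt (n+1)) ω) ⁻¹'
    {x | 2 * cc n * Real.sqrt (tt (n+1)) ≤ |x|} with hC
  have hsummable : Summable (fun n : ℕ => ((n:ℝ)+2) ^ (-(2:ℝ))) := by
    have h4 : Summable (fun n : ℕ => ((n:ℝ)) ^ (-(2:ℝ))) :=
      Real.summable_nat_rpow.2 (by norm_num)
    have := (summable_nat_add_iff 2).2 h4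
    refine this.congr fun n => ?_
    push_cast
    ring_nf
  have hfin : (∑' n, P (C n)) ≠ ∞ := by
    refine ne_top_of_le_ne_top ?_ (ENNReal.tsum_le_tsum (fun n => P_C_le hB n))
    rw [ENNReal.tsum_mul_left, ← ENNReal.ofReal_tsum_of_nonneg
      (fun n => by positivity) hsummable]
    exact ENNReal.mul_ne_top (by norm_num) ENNReal.ofReal_ne_top
  have h0 : P (limsup C atTop) = 0 := measure_limsup_atTop_eq_zero hfin
  have h1 : ∀ᵐ ω ∂P, ω ∉ limsup C atTop := by
    rw [MeasureTheory.ae_iff]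
    simpa [not_not] using h0
  filter_upwards [h1] with ω hω
  have := Filter.not_frequently.1 (fun hf => hω (mem_limsup_iff_frequently_mem.2 hf))
  filter_upwards [this] with n hn
  exact not_le.1 hn

end Prob

end BMaux

end Aux

/-- Almost surely, limsup_{t→0⁺} B_t/√t = ∞ for a standard
Brownian motion started at 0. -/
theorem limsup_brownian_div_sqrt_eq_top {Ω : Type*} [MeasurableSpace Ω]
    (P : Measure Ω) (B : ℝ → Ω → ℝ) (hB : IsBrownianMotion P B) :
    ∀ᵐ ω ∂P, Filter.limsup (fun t => ((B t ω / Real.sqrt t : ℝ) : EReal))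
      (nhdsWithin 0 (Set.Ioi 0)) = ⊤ := by
  open BMaux Filter in
  have htt : Filter.Tendsto BMaux.tt Filter.atTop (nhdsWithin 0 (Set.Ioi 0)) := by
    rw [tendsto_nhdsWithin_iff]
    constructor
    · have h0 : Tendsto (fun n : ℕ => (4:ℝ)*n) atTop atTop :=
        (tendsto_natCast_atTop_atTop).const_mul_atTop (by norm_num)
      have h1 : Tendsto (fun n : ℕ => -((4:ℝ)*n)) atTop atBot :=
        tendsto_neg_atTop_atBot.comp h0
      have h2 := Real.tendsto_exp_atBot.comp h1
      refine h2.congr fun n => ?_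
      rw [Function.comp_apply, BMaux.tt]
      congr 1
      ring
    · exact Filter.Eventually.of_forall fun n => Set.mem_Ioi.2 (BMaux.tt_pos n)
  filter_upwards [BMaux.freq_A hB, BMaux.ev_C hB] with ω hA hC
  rw [EReal.eq_top_iff_forall_lt]
  intro M
  have hlarge : ∀ᶠ n in Filter.atTop, M + 1 ≤ BMaux.cc n / 2 :=
    (BMaux.cc_tendsto.atTop_div_const two_pos).eventually_ge_atTop (M+1)
  have hkey : ∃ᶠ n in Filter.atTop,
      M + 1 ≤ B (BMaux.tt n) ω / Real.sqrt (BMaux.tt n) := by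
    refine ((hA.and_eventually hC).and_eventually hlarge).mono ?_
    rintro n ⟨⟨h1, h2⟩, h3⟩
    have hs := Real.sqrt_pos.2 (BMaux.tt_pos n)
    rw [BMaux.sqrt_split1] at h1
    rw [BMaux.sqrt_split2] at h2
    have habs := (abs_lt.1 h2).1
    have hBn : BMaux.cc n * (Real.sqrt (BMaux.tt n) * Real.sqrt (1 - Real.exp (-4)))
        - 2 * BMaux.cc n * (Real.sqrt (BMaux.tt n) * Real.exp (-2)) ≤ B (BMaux.tt n) ω := by
      have hdec : B (BMaux.tt n) ω
          = (B (BMaux.tt n) ω - B (BMaux.tt (n+1)) ω) + B (BMaux.tt (n+1)) ω := by ring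
      rw [hdec]
      have := h1
      linarith
    rw [le_div_iff₀ hs]
    have hk := BMaux.kappa_half
    have hcn := BMaux.cc_ge_half n
    have t1 : 0 ≤ BMaux.cc n * Real.sqrt (BMaux.tt n) *
        ((Real.sqrt (1 - Real.exp (-4)) - 2 * Real.exp (-2)) - 1/2) :=
      mul_nonneg (mul_nonneg (BMaux.cc_nonneg n) hs.le) (by linarith)
    have t2 : 0 ≤ (BMaux.cc n / 2 - (M+1)) * Real.sqrt (BMaux.tt n) :=
      mul_nonneg (by linarith) hs.le
    nlinarith
  have hfreq' : ∃ᶠ t in nhdsWithin 0 (Set.Ioi 0),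
      ((M+1 : ℝ) : EReal) ≤ ((B t ω / Real.sqrt t : ℝ) : EReal) := by
    have hm : ∃ᶠ t in Filter.map BMaux.tt Filter.atTop,
        ((M+1 : ℝ) : EReal) ≤ ((B t ω / Real.sqrt t : ℝ) : EReal) := by
      rw [Filter.frequently_map]
      exact hkey.mono fun n hn => EReal.coe_le_coe_iff.2 hn
    exact hm.filter_mono htt
  have hle : ((M+1 : ℝ) : EReal) ≤ Filter.limsup
      (fun t => ((B t ω / Real.sqrt t : ℝ) : EReal)) (nhdsWithin 0 (Set.Ioi 0)) :=
    le_limsup_of_frequently_le' hfreq'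
  refine lt_of_lt_of_le ?_ hle
  exact_mod_cast lt_add_one M
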